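/- For every real α, the large solutions k of the equation k(1 + 3cos k) + α·sin k = 0 approach arccos(−1/3) modulo 2π: precisely, for every ε > 0 there exists K such that every solution k > K satisfies dist(cos k, −1/3) < ε, i.e. |cos k + 1/3| < ε. -/
import Mathlib

open Real

/-- Large solutions of the secular equation k(1 + 3 cos k) + α sin k = 0 of a component
of the tetrahedron quantum graph with δ-coupling approach arccos(−1/3) modulo 2π:
their cosines approach −1/3. -/
theorem tetrahedron_delta_large_solutions (α : ℝ) :
    ∀ ε : ℝ, ε > 0 → ∃ K : ℝ, ∀ k : ℝ, k > K →
      k * (1 + 3 * cos k) + α * sin k = 0 → |cos k + 1 / 3| < ε := by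
  intro ε hε
  refine ⟨|α| / (3 * ε) + 1, fun k hk heq => ?_⟩
  have hα : 0 ≤ |α| := abs_nonneg α
  have hk0 : 0 < k := by
    have : (0:ℝ) ≤ |α| / (3 * ε) := by positivity
    linarith
  have h1 : |k * (1 + 3 * cos k)| = |α * sin k| := by
    have : k * (1 + 3 * cos k) = -(α * sin k) := by linarith
    rw [this, abs_neg]
  rw [abs_mul, abs_of_pos hk0] at h1
  have h2 : |1 + 3 * cos k| = 3 * |cos k + 1 / 3| := by
    rw [show (1:ℝ) + 3 * cos k = 3 * (cos k + 1 / 3) by ring, abs_mul]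
    norm_num
  have h3 : |α * sin k| ≤ |α| := by
    rw [abs_mul]
    nlinarith [abs_sin_le_one k, abs_nonneg (sin k)]
  have h4 : k * (3 * |cos k + 1 / 3|) ≤ |α| := by rw [← h2, h1]; exact h3
  have hd : |α| / (3 * ε) * (3 * ε) = |α| := div_mul_cancel₀ _ (by positivity)
  have h5 : 3 * k * ε > |α| := by nlinarith
  nlinarith [abs_nonneg (cos k + 1/3)]
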